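/- Let g ∈ SL(2,ℝ) and let β : ℝ → ℝ be measurable. Then, with values in [0,∞], ∫ κ_g(ρ)^{-4} β(ρ·g)² dλ(ρ) = ∫ κ_{g⁻¹}(ξ)³ β(ξ)² dλ(ξ); that is, the squared L²(λ)-norm of the dual action T′(g)β equals ∫ κ_{g⁻¹}³ β² dλ. In particular, for λ-almost every ξ one has κ_{g⁻¹}(ξ) · κ_g(ξ·g⁻¹) = 1. -/

import Mathlib

open MeasureTheory Matrix

noncomputable section

/-- `SL(2,ℝ)`, the group of real 2×2 matrices of determinant 1. -/
abbrev SL2 := Matrix.SpecialLinearGroup (Fin 2) ℝ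

/-- The Cauchy probability measure on `ℝ`, with density `ρ ↦ 1/(π(1+ρ²))` with
respect to Lebesgue measure. -/
def cauchyM : Measure ℝ :=
  volume.withDensity fun ρ => ENNReal.ofReal (1 / (Real.pi * (1 + ρ ^ 2)))

/-- The Möbius right action `ρ·g = (aρ+c)/(bρ+d)` of `g = [[a,b],[c,d]] ∈ SL(2,ℝ)`
on `ℝ` (here `a = g 0 0`, `b = g 0 1`, `c = g 1 0`, `d = g 1 1`). -/
def mob (g : SL2) (ρ : ℝ) : ℝ :=
  (g.1 0 0 * ρ + g.1 1 0) / (g.1 0 1 * ρ + g.1 1 1)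

/-- The factor `κ_g(ρ) = ((aρ+c)² + (bρ+d)²)/(ρ²+1)`. -/
def kappa (g : SL2) (ρ : ℝ) : ℝ :=
  ((g.1 0 0 * ρ + g.1 1 0) ^ 2 + (g.1 0 1 * ρ + g.1 1 1) ^ 2) / (ρ ^ 2 + 1)


lemma lintegral_image_1d {s : Set ℝ} {f f' : ℝ → ℝ} (hs : MeasurableSet s)
    (hf' : ∀ x ∈ s, HasDerivWithinAt f (f' x) s x) (hf : Set.InjOn f s) (g : ℝ → ENNReal) :
    ∫⁻ x in f '' s, g x = ∫⁻ x in s, ENNReal.ofReal |f' x| * g (f x) := by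
  simpa only [ContinuousLinearMap.det_toSpanSingleton] using
    lintegral_image_eq_lintegral_abs_det_fderiv_mul volume hs
      (fun x hx => (hf' x hx).hasFDerivWithinAt) hf g

lemma restrict_full {A : Set ℝ} (hA : MeasurableSet A) (hAc : volume Aᶜ = 0)
    (h : ℝ → ENNReal) : ∫⁻ x in A, h x = ∫⁻ x, h x := by
  calc ∫⁻ x in A, h x = (∫⁻ x in A, h x) + ∫⁻ x in Aᶜ, h x := by
        rw [setLIntegral_measure_zero _ _ hAc]; simp
    _ = ∫⁻ x, h x := lintegral_add_compl h hA (μ := volume)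


/-- The squared `L²(λ)`-norm of the dual action `T′(g)β` transforms as
`∫ κ_g(ρ)⁻⁴ β(ρ·g)² dλ(ρ) = ∫ κ_{g⁻¹}(ξ)³ β(ξ)² dλ(ξ)` (with values in `[0,∞]`);
in particular, for λ-almost every `ξ`, `κ_{g⁻¹}(ξ) · κ_g(ξ·g⁻¹) = 1`. -/
theorem dual_action_norm_sq (g : SL2) (β : ℝ → ℝ) (hβ : Measurable β) :
    (∫⁻ ρ, ENNReal.ofReal ((kappa g ρ ^ 4)⁻¹ * β (mob g ρ) ^ 2) ∂cauchyM
      = ∫⁻ ξ, ENNReal.ofReal (kappa g⁻¹ ξ ^ 3 * β ξ ^ 2) ∂cauchyM) ∧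
    (∀ᵐ ξ ∂cauchyM, kappa g⁻¹ ξ * kappa g (mob g⁻¹ ξ) = 1) := by
  set a := g.1 0 0 with ha
  set b := g.1 0 1 with hb
  set c := g.1 1 0 with hc
  set d := g.1 1 1 with hd
  have det : a * d - b * c = 1 := by
    have := g.2; rwa [Matrix.det_fin_two] at this
  have h00 : g⁻¹.1 0 0 = d := by
    rw [Matrix.SpecialLinearGroup.coe_inv, Matrix.adjugate_fin_two]; rfl
  have h01 : g⁻¹.1 0 1 = -b := by
    rw [Matrix.SpecialLinearGroup.coe_inv, Matrix.adjugate_fin_two]; rfl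
  have h10 : g⁻¹.1 1 0 = -c := by
    rw [Matrix.SpecialLinearGroup.coe_inv, Matrix.adjugate_fin_two]; rfl
  have h11 : g⁻¹.1 1 1 = a := by
    rw [Matrix.SpecialLinearGroup.coe_inv, Matrix.adjugate_fin_two]; rfl
  set F : ℝ → ℝ := fun ξ => (d * ξ - c) / (a - b * ξ) with hF
  have hmobinv : mob g⁻¹ = F := by
    funext ξ; rw [mob, h00, h01, h10, h11, hF]
    congr 1 <;> ring
  set s : Set ℝ := {ξ | a - b * ξ ≠ 0} with hs
  have hsm : MeasurableSet s := by
    have : s = (fun ξ => a - b * ξ) ⁻¹' ({0}ᶜ) := rfl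
    rw [this]
    exact (measurable_const.sub (measurable_const.mul measurable_id))
      (measurableSet_singleton 0).compl
  have hscnull : volume sᶜ = 0 := by
    rcases eq_or_ne b 0 with hb0 | hb0
    · have ha0 : a ≠ 0 := by
        intro h; rw [h, hb0] at det; simp at det
      have : sᶜ = ∅ := by ext ξ; simp [hs, hb0, ha0]
      rw [this]; simp
    · have : sᶜ ⊆ {a / b} := by
        intro ξ hξ
        simp only [hs, Set.mem_compl_iff, Set.mem_setOf_eq, not_not] at hξ
        have : ξ = a / b := by field_simp; linarith
        simp [this]
      exact measure_mono_null this (measure_singleton _)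
  -- pointwise facts on s
  have fact_bd : ∀ ξ ∈ s, b * F ξ + d = 1 / (a - b * ξ) := by
    intro ξ hξ
    have h : a - b * ξ ≠ 0 := hξ
    rw [hF]; field_simp; linear_combination det
  have fact_ac : ∀ ξ ∈ s, a * F ξ + c = ξ / (a - b * ξ) := by
    intro ξ hξ
    have h : a - b * ξ ≠ 0 := hξ
    rw [hF]; simp only; rw [mul_div_assoc', div_add' _ _ _ h, div_left_inj' h]; linear_combination ξ * det
  have hleft : ∀ ξ ∈ s, mob g (F ξ) = ξ := by
    intro ξ hξ
    have h : a - b * ξ ≠ 0 := hξ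
    rw [mob, ← ha, ← hb, ← hc, ← hd, fact_ac ξ hξ, fact_bd ξ hξ]
    field_simp
    rw [mul_comm ξ b]; exact mul_div_cancel_right₀ ξ h
  have hρsq : ∀ ξ ∈ s, 1 + (F ξ) ^ 2
      = ((d * ξ - c) ^ 2 + (a - b * ξ) ^ 2) / (a - b * ξ) ^ 2 := by
    intro ξ hξ
    have h : a - b * ξ ≠ 0 := hξ
    rw [hF]; simp only; rw [div_pow, one_add_div (pow_ne_zero 2 h)]; ring
  have hNpos : ∀ ξ ∈ s, 0 < (d * ξ - c) ^ 2 + (a - b * ξ) ^ 2 := by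
    intro ξ hξ
    have h : a - b * ξ ≠ 0 := hξ
    have : 0 < (a - b * ξ) ^ 2 := (sq_nonneg _).lt_of_ne (Ne.symm (pow_ne_zero 2 h))
    nlinarith [sq_nonneg (d * ξ - c)]
  have hKinv : ∀ ξ : ℝ, kappa g⁻¹ ξ
      = ((d * ξ - c) ^ 2 + (a - b * ξ) ^ 2) / (ξ ^ 2 + 1) := by
    intro ξ
    rw [kappa, h00, h01, h10, h11]
    congr 1 <;> ring
  have hKg : ∀ ξ ∈ s, kappa g (F ξ)
      = (ξ ^ 2 + 1) / ((d * ξ - c) ^ 2 + (a - b * ξ) ^ 2) := by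
    intro ξ hξ
    have h : a - b * ξ ≠ 0 := hξ
    have hN : (d * ξ - c) ^ 2 + (a - b * ξ) ^ 2 ≠ 0 := ne_of_gt (hNpos ξ hξ)
    have h1 : (ξ:ℝ) ^ 2 + 1 ≠ 0 := by positivity
    rw [kappa, ← ha, ← hb, ← hc, ← hd, fact_ac ξ hξ, fact_bd ξ hξ]
    have e : (F ξ) ^ 2 + 1 = ((d * ξ - c) ^ 2 + (a - b * ξ) ^ 2) / (a - b * ξ) ^ 2 := by
      rw [← hρsq ξ hξ]; ring
    rw [e]
    field_simp
    rw [mul_comm ξ b, div_mul_eq_div_div, div_self h]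
  have hKprod : ∀ ξ ∈ s, kappa g⁻¹ ξ * kappa g (F ξ) = 1 := by
    intro ξ hξ
    have hN : (d * ξ - c) ^ 2 + (a - b * ξ) ^ 2 ≠ 0 := ne_of_gt (hNpos ξ hξ)
    have h1 : (ξ:ℝ) ^ 2 + 1 ≠ 0 := by positivity
    rw [hKinv ξ, hKg ξ hξ]
    field_simp
    rw [mul_comm ξ b]; exact div_self hN
  -- almost-everywhere statement
  have hcacnull : ∀ {A : Set ℝ}, volume A = 0 → cauchyM A = 0 := by
    intro A hA
    exact (withDensity_absolutelyContinuous volume _) hA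
  have aepart : ∀ᵐ ξ ∂cauchyM, kappa g⁻¹ ξ * kappa g (mob g⁻¹ ξ) = 1 := by
    rw [ae_iff]
    refine hcacnull (measure_mono_null ?_ hscnull)
    intro ξ hξ
    simp only [Set.mem_setOf_eq, hmobinv] at hξ
    exact fun hmem => hξ (hKprod ξ hmem)
  refine ⟨?_, aepart⟩
  -- the image set
  set t : Set ℝ := {ρ | b * ρ + d ≠ 0} with ht
  have htm : MeasurableSet t := by
    have : t = (fun ρ => b * ρ + d) ⁻¹' ({0}ᶜ) := rfl
    rw [this]
    exact ((measurable_const.mul measurable_id).add measurable_const)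
      (measurableSet_singleton 0).compl
  have htcnull : volume tᶜ = 0 := by
    rcases eq_or_ne b 0 with hb0 | hb0
    · have hd0 : d ≠ 0 := by
        intro h; rw [h, hb0] at det; simp at det
      have : tᶜ = ∅ := by ext ρ; simp [ht, hb0, hd0]
      rw [this]; simp
    · have : tᶜ ⊆ {-d / b} := by
        intro ρ hρ
        simp only [ht, Set.mem_compl_iff, Set.mem_setOf_eq, not_not] at hρ
        have : ρ = -d / b := by field_simp; linarith
        simp [this]
      exact measure_mono_null this (measure_singleton _)
  have himage : F '' s = t := by
    apply Set.Subset.antisymm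
    · rintro _ ⟨ξ, hξ, rfl⟩
      have h : a - b * ξ ≠ 0 := hξ
      show b * F ξ + d ≠ 0
      rw [fact_bd ξ hξ]
      exact one_div_ne_zero h
    · intro ρ hρ
      have hρ' : b * ρ + d ≠ 0 := hρ
      refine ⟨(a * ρ + c) / (b * ρ + d), ?_, ?_⟩
      · show a - b * ((a * ρ + c) / (b * ρ + d)) ≠ 0
        have e1 : a - b * ((a * ρ + c) / (b * ρ + d)) = 1 / (b * ρ + d) := by
          field_simp; linear_combination det
        rw [e1]; exact one_div_ne_zero hρ'
      · have e1 : a - b * ((a * ρ + c) / (b * ρ + d)) = 1 / (b * ρ + d) := by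
          field_simp; linear_combination det
        have e2 : d * ((a * ρ + c) / (b * ρ + d)) - c = ρ / (b * ρ + d) := by
          rw [mul_div_assoc', div_sub' hρ', div_left_inj' hρ']; linear_combination ρ * det
        rw [hF]
        simp only
        rw [e1, e2]
        field_simp
        exact mul_div_cancel_right₀ ρ (by rwa [mul_comm])
  -- derivative
  set F' : ℝ → ℝ := fun ξ => ((a - b * ξ) ^ 2)⁻¹ with hF'
  have hder : ∀ ξ ∈ s, HasDerivWithinAt F (F' ξ) s ξ := by
    intro ξ hξ
    have h : a - b * ξ ≠ 0 := hξ
    have hnum : HasDerivAt (fun ξ : ℝ => d * ξ - c) d ξ := by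
      simpa using ((hasDerivAt_id ξ).const_mul d).sub_const c
    have hden : HasDerivAt (fun ξ : ℝ => a - b * ξ) (-b) ξ := by
      simpa using ((hasDerivAt_id ξ).const_mul b).const_sub a
    have : HasDerivWithinAt F _ s ξ := (hnum.div hden h).hasDerivWithinAt (s := s)
    convert this using 1
    show ((a - b * ξ) ^ 2)⁻¹ = _
    have e : d * (a - b * ξ) - (d * ξ - c) * -b = 1 := by linear_combination det
    rw [e, one_div]
  have hinj : Set.InjOn F s := by
    intro x hx y hy hxy
    rw [← hleft x hx, ← hleft y hy, hxy]
  -- measurability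
  have hmobm : Measurable (mob g) := by
    unfold mob; fun_prop
  have hkm : Measurable (kappa g) := by
    unfold kappa; fun_prop
  have hkim : Measurable (kappa g⁻¹) := by
    unfold kappa; fun_prop
  set w : ℝ → ENNReal := fun ρ => ENNReal.ofReal (1 / (Real.pi * (1 + ρ ^ 2))) with hw
  have hwm : Measurable w := by
    apply Measurable.ennreal_ofReal; fun_prop
  set I : ℝ → ENNReal := fun ρ => ENNReal.ofReal ((kappa g ρ ^ 4)⁻¹ * β (mob g ρ) ^ 2) with hI
  have hIm : Measurable I := by
    apply Measurable.ennreal_ofReal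
    exact ((hkm.pow_const 4).inv.mul ((hβ.comp hmobm).pow_const 2))
  set J : ℝ → ENNReal := fun ξ => ENNReal.ofReal (kappa g⁻¹ ξ ^ 3 * β ξ ^ 2) with hJ
  have hJm : Measurable J := by
    apply Measurable.ennreal_ofReal
    exact ((hkim.pow_const 3).mul (hβ.pow_const 2))
  -- the pointwise integrand identity on s
  have hpoint : ∀ ξ ∈ s,
      ENNReal.ofReal |F' ξ| * (w (F ξ) * I (F ξ)) = w ξ * J ξ := by
    intro ξ hξ
    have h : a - b * ξ ≠ 0 := hξ
    have hN : (d * ξ - c) ^ 2 + (a - b * ξ) ^ 2 ≠ 0 := ne_of_gt (hNpos ξ hξ)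
    have h1 : (ξ:ℝ) ^ 2 + 1 ≠ 0 := by positivity
    have hπ : Real.pi ≠ 0 := Real.pi_ne_zero
    have hwnn : (0:ℝ) ≤ 1 / (Real.pi * (1 + (F ξ) ^ 2)) := by positivity
    have hwnn2 : (0:ℝ) ≤ 1 / (Real.pi * (1 + ξ ^ 2)) := by positivity
    have habs : |F' ξ| = ((a - b * ξ) ^ 2)⁻¹ := by
      rw [hF']; exact abs_of_nonneg (by positivity)
    rw [hw, hI, hJ]
    simp only
    rw [← ENNReal.ofReal_mul hwnn, ← ENNReal.ofReal_mul hwnn2, habs,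
      ← ENNReal.ofReal_mul (by positivity)]
    congr 1
    rw [hleft ξ hξ, hKg ξ hξ, hKinv ξ, hρsq ξ hξ]
    have e1 := hNpos ξ hξ
    set N := (d * ξ - c) ^ 2 + (a - b * ξ) ^ 2 with hNdef
    field_simp
    ring
  -- main computation
  calc ∫⁻ ρ, I ρ ∂cauchyM
      = ∫⁻ ρ, (w * I) ρ := by
        rw [cauchyM]
        exact lintegral_withDensity_eq_lintegral_mul volume hwm hIm
    _ = ∫⁻ ρ in t, w ρ * I ρ := by
        simp only [Pi.mul_apply]
        exact (restrict_full htm htcnull _).symm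
    _ = ∫⁻ ρ in F '' s, w ρ * I ρ := by rw [himage]
    _ = ∫⁻ ξ in s, ENNReal.ofReal |F' ξ| * (w (F ξ) * I (F ξ)) :=
        lintegral_image_1d hsm hder hinj _
    _ = ∫⁻ ξ in s, w ξ * J ξ :=
        setLIntegral_congr_fun hsm hpoint
    _ = ∫⁻ ξ, (w * J) ξ := by
        simp only [Pi.mul_apply]
        exact restrict_full hsm hscnull _
    _ = ∫⁻ ξ, J ξ ∂cauchyM := by
        rw [cauchyM]
        exact (lintegral_withDensity_eq_lintegral_mul volume hwm hJm).symm
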